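/- Let ω be a nonnegative finite Borel measure on ∂Ω, let η ∈ C(Ω) be a positive weight function, and let ℋ be a continuous nonnegative function on Ω × ∂Ω. Suppose there exist C > 0 and τ > 1 such that for every y ∈ ∂Ω and every λ > 0 one has ∫_{{x ∈ Ω : ℋ(x,y) > λ}} η(x) dx ≤ C λ^{−τ}. Then the function ℍ[ω](x) := ∫_{∂Ω} ℋ(x,y) dω(y) satisfies: for every measurable set A ⊆ Ω with 0 < ∫_A η dx < ∞, ∫_A ℍ[ω] η dx ≤ (1 + Cτ/(τ−1)) ω(∂Ω) ( ∫_A η dx )^{(τ−1)/τ}. -/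

import Mathlib

open MeasureTheory Set Metric

/-- Weak-type estimate for a kernel operator against a finite boundary
measure (Bidaut-Véron–Vivier type lemma). -/
theorem stmt_1 {N : ℕ} (Ω : Set (EuclideanSpace ℝ (Fin N)))
    (hΩo : IsOpen Ω) (hΩb : Bornology.IsBounded Ω)
    (ω : Measure (EuclideanSpace ℝ (Fin N))) [IsFiniteMeasure ω]
    (hωsupp : ω (frontier Ω)ᶜ = 0)
    (η : EuclideanSpace ℝ (Fin N) → ℝ) (hηc : ContinuousOn η Ω) (hηpos : ∀ x ∈ Ω, 0 < η x)
    (H : EuclideanSpace ℝ (Fin N) → EuclideanSpace ℝ (Fin N) → ℝ)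
    (hHc : ContinuousOn (fun z : EuclideanSpace ℝ (Fin N) × EuclideanSpace ℝ (Fin N) =>
      H z.1 z.2) (Ω ×ˢ frontier Ω))
    (hHnn : ∀ x ∈ Ω, ∀ y ∈ frontier Ω, 0 ≤ H x y)
    (C τ : ℝ) (hC : 0 < C) (hτ : 1 < τ)
    (hbound : ∀ y ∈ frontier Ω, ∀ l : ℝ, 0 < l →
      ∫⁻ x in {x ∈ Ω | l < H x y}, ENNReal.ofReal (η x) ≤ ENNReal.ofReal (C * l ^ (-τ))) :
    ∀ A : Set (EuclideanSpace ℝ (Fin N)), MeasurableSet A → A ⊆ Ω →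
      0 < ∫⁻ x in A, ENNReal.ofReal (η x) → (∫⁻ x in A, ENNReal.ofReal (η x)) < ⊤ →
      ∫⁻ x in A, (∫⁻ y, ENNReal.ofReal (H x y) ∂ω) * ENNReal.ofReal (η x) ≤
        ENNReal.ofReal ((1 + C * τ / (τ - 1)) * (ω (frontier Ω)).toReal *
          (∫⁻ x in A, ENNReal.ofReal (η x)).toReal ^ ((τ - 1) / τ)) := by
  intro A hA hAΩ hpos hfin
  have hτ0 : (0:ℝ) < τ := by linarith
  have hτ1 : (0:ℝ) < τ - 1 := by linarith
  set m : ENNReal := ∫⁻ x in A, ENNReal.ofReal (η x) with hmdef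
  set M : ℝ := m.toReal with hMdef
  have hM0 : 0 < M := ENNReal.toReal_pos hpos.ne' hfin.ne
  set l0 : ℝ := M ^ (-1/τ) with hl0def
  have hl0pos : 0 < l0 := Real.rpow_pos_of_pos hM0 _
  have hMexp : 0 < M ^ ((τ-1)/τ) := Real.rpow_pos_of_pos hM0 _
  set K : ℝ := (1 + C/(τ-1)) * M ^ ((τ-1)/τ) with hKdef
  have hKnn : 0 ≤ K := by
    apply mul_nonneg _ hMexp.le
    have : 0 ≤ C / (τ-1) := div_nonneg hC.le hτ1.le
    linarith
  -- measurability of the density on A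
  have hηae : AEMeasurable η (volume.restrict A) :=
    (hηc.aemeasurable hΩo.measurableSet).mono_measure
      (Measure.restrict_mono hAΩ le_rfl)
  have hgae : AEMeasurable (fun x => ENNReal.ofReal (η x)) (volume.restrict A) :=
    ENNReal.measurable_ofReal.comp_aemeasurable hηae
  -- the weighted measure ν
  set ν : Measure (EuclideanSpace ℝ (Fin N)) :=
    (volume.restrict A).withDensity (fun x => ENNReal.ofReal (η x)) with hνdef
  have hν_ac : ν ≪ volume.restrict A := withDensity_absolutelyContinuous _ _
  have hν_univ : ν univ = m := by
    rw [hνdef, withDensity_apply _ MeasurableSet.univ, Measure.restrict_univ]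
  have hν_compl : ν Ωᶜ = 0 := by
    rw [hνdef, withDensity_apply _ hΩo.measurableSet.compl,
      Measure.restrict_restrict hΩo.measurableSet.compl]
    have hempty : Ωᶜ ∩ A = ∅ := by
      ext x
      simp only [mem_inter_iff, mem_compl_iff, mem_empty_iff_false, iff_false, not_and]
      exact fun hx hxA => hx (hAΩ hxA)
    rw [hempty, Measure.restrict_empty, lintegral_zero_measure]
  -- inner estimate for each boundary point
  have inner : ∀ y ∈ frontier Ω,
      (∫⁻ x in A, ENNReal.ofReal (H x y) * ENNReal.ofReal (η x)) ≤ ENNReal.ofReal K := by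
    intro y hy
    have hHy : ContinuousOn (fun x => H x y) Ω := by
      have hmap : ContinuousOn (fun x : EuclideanSpace ℝ (Fin N) => (x, y)) Ω :=
        (continuous_id.prodMk continuous_const).continuousOn
      exact hHc.comp hmap (fun x hx => ⟨hx, hy⟩)
    have hHyae : AEMeasurable (fun x => H x y) ν :=
      ((hHy.aemeasurable hΩo.measurableSet).mono_measure
        (Measure.restrict_mono hAΩ le_rfl)).mono_ac hν_ac
    have hHynn : 0 ≤ᵐ[ν] fun x => H x y := by
      apply hν_ac.ae_le
      filter_upwards [ae_restrict_mem hA] with x hx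
      exact hHnn x (hAΩ hx) y hy
    -- rewrite as integral against ν
    have hofae : AEMeasurable (fun x => ENNReal.ofReal (H x y))
        ((volume.restrict A).withDensity fun x => ENNReal.ofReal (η x)) :=
      ENNReal.measurable_ofReal.comp_aemeasurable hHyae
    have step1 : (∫⁻ x in A, ENNReal.ofReal (H x y) * ENNReal.ofReal (η x)) =
        ∫⁻ x, ENNReal.ofReal (H x y) ∂ν := by
      rw [hνdef, lintegral_withDensity_eq_lintegral_mul₀' hgae hofae]
      exact lintegral_congr fun x => by simp [mul_comm]
    -- layer cake
    have step2 : (∫⁻ x, ENNReal.ofReal (H x y) ∂ν) =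
        ∫⁻ t in Ioi (0:ℝ), ν {x | t < H x y} :=
      lintegral_eq_lintegral_meas_lt ν hHynn hHyae
    -- tail bound for superlevel sets
    have hν_tail : ∀ t : ℝ, 0 < t →
        ν {x | t < H x y} ≤ ENNReal.ofReal (C * t ^ (-τ)) := by
      intro t ht
      have hopen : IsOpen (Ω ∩ (fun x => H x y) ⁻¹' Ioi t) :=
        hHy.isOpen_inter_preimage hΩo isOpen_Ioi
      have hsub : {x | t < H x y} ⊆ (Ω ∩ (fun x => H x y) ⁻¹' Ioi t) ∪ Ωᶜ := by
        intro x hx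
        by_cases hxΩ : x ∈ Ω
        · exact Or.inl ⟨hxΩ, hx⟩
        · exact Or.inr hxΩ
      have hkey : ν (Ω ∩ (fun x => H x y) ⁻¹' Ioi t) ≤ ENNReal.ofReal (C * t ^ (-τ)) := by
        rw [hνdef, withDensity_apply _ hopen.measurableSet,
          Measure.restrict_restrict hopen.measurableSet]
        refine le_trans (lintegral_mono_set ?_) (hbound y hy t ht)
        intro x hx
        exact ⟨hx.1.1, hx.1.2⟩
      calc ν {x | t < H x y} ≤ ν ((Ω ∩ (fun x => H x y) ⁻¹' Ioi t) ∪ Ωᶜ) :=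
            measure_mono hsub
        _ ≤ ν (Ω ∩ (fun x => H x y) ⁻¹' Ioi t) + ν Ωᶜ := measure_union_le _ _
        _ = ν (Ω ∩ (fun x => H x y) ⁻¹' Ioi t) := by rw [hν_compl, add_zero]
        _ ≤ ENNReal.ofReal (C * t ^ (-τ)) := hkey
    -- the two pieces
    have h1 : (∫⁻ t in Ioc (0:ℝ) l0, ν {x | t < H x y}) ≤ m * ENNReal.ofReal l0 := by
      calc (∫⁻ t in Ioc (0:ℝ) l0, ν {x | t < H x y})
          ≤ ∫⁻ _t in Ioc (0:ℝ) l0, m := by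
            refine lintegral_mono fun t => ?_
            rw [← hν_univ]
            exact measure_mono (subset_univ _)
        _ = m * volume (Ioc (0:ℝ) l0) := setLIntegral_const _ _
        _ = m * ENNReal.ofReal l0 := by rw [Real.volume_Ioc, sub_zero]
    have h2 : (∫⁻ t in Ioi l0, ν {x | t < H x y}) ≤
        ENNReal.ofReal (C * l0 ^ (1-τ) / (τ-1)) := by
      have hb : (∫⁻ t in Ioi l0, ν {x | t < H x y}) ≤
          ∫⁻ t in Ioi l0, ENNReal.ofReal (C * t ^ (-τ)) := by
        refine lintegral_mono_ae ?_
        filter_upwards [ae_restrict_mem measurableSet_Ioi] with t ht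
        exact hν_tail t (hl0pos.trans ht)
      have hint : IntegrableOn (fun t : ℝ => C * t ^ (-τ)) (Ioi l0) :=
        (integrableOn_Ioi_rpow_of_lt (by linarith) hl0pos).const_mul C
      have hnn : 0 ≤ᵐ[volume.restrict (Ioi l0)] fun t : ℝ => C * t ^ (-τ) := by
        filter_upwards [ae_restrict_mem measurableSet_Ioi] with t ht
        exact mul_nonneg hC.le (Real.rpow_nonneg (hl0pos.trans ht).le _)
      have heq : (∫⁻ t in Ioi l0, ENNReal.ofReal (C * t ^ (-τ))) =
          ENNReal.ofReal (∫ t in Ioi l0, C * t ^ (-τ)) :=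
        (ofReal_integral_eq_lintegral_ofReal hint hnn).symm
      have hval : (∫ t in Ioi l0, C * t ^ (-τ)) = C * l0 ^ (1-τ) / (τ-1) := by
        rw [MeasureTheory.integral_const_mul, integral_Ioi_rpow_of_lt (by linarith) hl0pos]
        have he : -τ + 1 = 1 - τ := by ring
        rw [he]
        have h1τ : (1:ℝ) - τ ≠ 0 := by linarith
        have h2τ : τ - 1 ≠ 0 := by linarith
        set u : ℝ := l0 ^ (1-τ) with hu
        field_simp
        ring
      exact hb.trans (le_of_eq (heq.trans (by rw [hval])))
    -- combine
    have hsplit : (∫⁻ t in Ioi (0:ℝ), ν {x | t < H x y}) =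
        (∫⁻ t in Ioc (0:ℝ) l0, ν {x | t < H x y}) +
          ∫⁻ t in Ioi l0, ν {x | t < H x y} := by
      rw [← Ioc_union_Ioi_eq_Ioi hl0pos.le,
        lintegral_union measurableSet_Ioi (Ioc_disjoint_Ioi le_rfl)]
    have harith : m * ENNReal.ofReal l0 + ENNReal.ofReal (C * l0 ^ (1-τ) / (τ-1)) =
        ENNReal.ofReal K := by
      have hm_eq : m = ENNReal.ofReal M := (ENNReal.ofReal_toReal hfin.ne).symm
      rw [hm_eq, ← ENNReal.ofReal_mul hM0.le,
        ← ENNReal.ofReal_add (mul_nonneg hM0.le hl0pos.le)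
          (div_nonneg (mul_nonneg hC.le (Real.rpow_nonneg hl0pos.le _)) hτ1.le)]
      congr 1
      have e1 : M * l0 = M ^ ((τ-1)/τ) := by
        rw [hl0def]
        rw [show M * M ^ (-1/τ) = M ^ (1:ℝ) * M ^ (-1/τ) by rw [Real.rpow_one],
          ← Real.rpow_add hM0]
        congr 1
        field_simp
        ring
      have e2 : l0 ^ (1-τ) = M ^ ((τ-1)/τ) := by
        rw [hl0def, ← Real.rpow_mul hM0.le]
        congr 1
        field_simp
        ring
      rw [e1, e2, hKdef]
      ring
    calc (∫⁻ x in A, ENNReal.ofReal (H x y) * ENNReal.ofReal (η x))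
        = ∫⁻ t in Ioi (0:ℝ), ν {x | t < H x y} := step1.trans step2
      _ = _ + _ := hsplit
      _ ≤ m * ENNReal.ofReal l0 + ENNReal.ofReal (C * l0 ^ (1-τ) / (τ-1)) :=
          add_le_add h1 h2
      _ = ENNReal.ofReal K := harith
  -- outer part: swap the integrals
  have hT : MeasurableSet (Ω ×ˢ frontier Ω) :=
    hΩo.measurableSet.prod isClosed_frontier.measurableSet
  have hcont : ContinuousOn
      (fun z : EuclideanSpace ℝ (Fin N) × EuclideanSpace ℝ (Fin N) =>
        ENNReal.ofReal (H z.1 z.2 * η z.1))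
      (Ω ×ˢ frontier Ω) := by
    refine ENNReal.continuous_ofReal.comp_continuousOn ?_
    exact hHc.mul (hηc.comp continuous_fst.continuousOn (fun z hz => hz.1))
  have hnull : ((volume.restrict A).prod ω) (Ω ×ˢ frontier Ω)ᶜ = 0 := by
    have hsub : (Ω ×ˢ frontier Ω)ᶜ ⊆ (Ωᶜ ×ˢ univ) ∪ (univ ×ˢ (frontier Ω)ᶜ) := by
      intro z hz
      simp only [mem_compl_iff, mem_prod, not_and] at hz
      by_cases h1 : z.1 ∈ Ω
      · exact Or.inr ⟨trivial, hz h1⟩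
      · exact Or.inl ⟨h1, trivial⟩
    refine le_antisymm (le_trans (measure_mono hsub) ?_) zero_le
    refine le_trans (measure_union_le _ _) ?_
    rw [Measure.prod_prod, Measure.prod_prod, hωsupp, mul_zero,
      Measure.restrict_apply hΩo.measurableSet.compl]
    have hempty : Ωᶜ ∩ A = ∅ := by
      ext x
      simp only [mem_inter_iff, mem_compl_iff, mem_empty_iff_false, iff_false, not_and]
      exact fun hx hxA => hx (hAΩ hxA)
    rw [hempty, measure_empty, zero_mul, add_zero]
  have haemem : ∀ᵐ z ∂((volume.restrict A).prod ω), z ∈ Ω ×ˢ frontier Ω :=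
    ae_iff.mpr hnull
  have hswap_meas : AEMeasurable
      (Function.uncurry fun x y => ENNReal.ofReal (H x y) * ENNReal.ofReal (η x))
      ((volume.restrict A).prod ω) := by
    have hres := hcont.aemeasurable hT (μ := (volume.restrict A).prod ω)
    rw [Measure.restrict_eq_self_of_ae_mem haemem] at hres
    refine hres.congr ?_
    filter_upwards [haemem] with z hz
    simp only [Function.uncurry]
    rw [ENNReal.ofReal_mul (hHnn z.1 hz.1 z.2 hz.2)]
  have swap : (∫⁻ x in A, ∫⁻ y, ENNReal.ofReal (H x y) * ENNReal.ofReal (η x) ∂ω) =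
      ∫⁻ y, (∫⁻ x in A, ENNReal.ofReal (H x y) * ENNReal.ofReal (η x)) ∂ω :=
    lintegral_lintegral_swap hswap_meas
  have main : (∫⁻ x in A, (∫⁻ y, ENNReal.ofReal (H x y) ∂ω) * ENNReal.ofReal (η x)) =
      ∫⁻ y, (∫⁻ x in A, ENNReal.ofReal (H x y) * ENNReal.ofReal (η x)) ∂ω := by
    have step : (∫⁻ x in A, (∫⁻ y, ENNReal.ofReal (H x y) ∂ω) * ENNReal.ofReal (η x)) =
        ∫⁻ x in A, ∫⁻ y, ENNReal.ofReal (H x y) * ENNReal.ofReal (η x) ∂ω :=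
      lintegral_congr fun x => (lintegral_mul_const' _ _ ENNReal.ofReal_ne_top).symm
    exact step.trans swap
  have hfreq : ∀ᵐ y ∂ω, y ∈ frontier Ω := by
    rw [ae_iff]
    exact hωsupp
  have hωuniv : ω univ = ω (frontier Ω) := by
    have h := measure_add_measure_compl (μ := ω) (s := frontier Ω) isClosed_frontier.measurableSet
    rw [hωsupp, add_zero] at h
    exact h.symm
  calc (∫⁻ x in A, (∫⁻ y, ENNReal.ofReal (H x y) ∂ω) * ENNReal.ofReal (η x))
      = ∫⁻ y, (∫⁻ x in A, ENNReal.ofReal (H x y) * ENNReal.ofReal (η x)) ∂ω := main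
    _ ≤ ∫⁻ _y, ENNReal.ofReal K ∂ω := by
        apply lintegral_mono_ae
        filter_upwards [hfreq] with y hy
        exact inner y hy
    _ = ENNReal.ofReal K * ω univ := lintegral_const _
    _ = ENNReal.ofReal K * ω (frontier Ω) := by rw [hωuniv]
    _ ≤ ENNReal.ofReal ((1 + C * τ / (τ - 1)) * (ω (frontier Ω)).toReal *
          M ^ ((τ - 1) / τ)) := by
        have hTv : ENNReal.ofReal K * ω (frontier Ω) =
            ENNReal.ofReal (K * (ω (frontier Ω)).toReal) := by
          conv_lhs => rw [← ENNReal.ofReal_toReal (measure_ne_top ω (frontier Ω))]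
          rw [← ENNReal.ofReal_mul hKnn]
        rw [hTv]
        apply ENNReal.ofReal_le_ofReal
        have hle : 1 + C/(τ-1) ≤ 1 + C*τ/(τ-1) := by
          have hCC : C/(τ-1) ≤ C*τ/(τ-1) := by
            gcongr
            nlinarith
          linarith
        calc K * (ω (frontier Ω)).toReal
            = ((1 + C/(τ-1)) * M ^ ((τ-1)/τ)) * (ω (frontier Ω)).toReal := by rw [hKdef]
          _ ≤ ((1 + C*τ/(τ-1)) * M ^ ((τ-1)/τ)) * (ω (frontier Ω)).toReal :=
              mul_le_mul_of_nonneg_right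
                (mul_le_mul_of_nonneg_right hle hMexp.le) ENNReal.toReal_nonneg
          _ = (1 + C * τ / (τ - 1)) * (ω (frontier Ω)).toReal * M ^ ((τ - 1) / τ) := by
              ring
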